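/- arXiv:2304.10046 — 3 statements merged into one kernel-verified Lean document; each statement's English description precedes it below -/
import Mathlib

section
/- Let n ≥ 1 be an integer, let a₀ ≠ 0 and 0 < a₁ ≤ a₂ ≤ ⋯ ≤ a_n be real numbers, and set P(x) = a₀·∏_{i=1}^n (x² − a_i²). If a₀ > 0, then each of the functions P(x)/x^j for j = 0, 1, …, 2n, P′(x)/x^j for j = 0, 1, …, 2n−2, and P″(x)/x^j for j = 0, 1, …, 2n−4 is strictly monotonically increasing on the interval (a_n, ∞); if a₀ < 0, then each of these functions is strictly monotonically decreasing on (a_n, ∞). -/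
open Set Finset

/-- Key pointwise strict inequality: `x^m * ∏ (1 - aᵢ²/x²)` is strictly increasing
for `c < x < y`, provided `m ≥ 1` or the index set is nonempty. -/
theorem aux_key {n : ℕ} (a : Fin n → ℝ) (hapos : ∀ i, 0 < a i) (c : ℝ) (hc : 0 < c)
    (hac : ∀ i, a i ≤ c) (s : Finset (Fin n)) (m : ℕ) (hm : 1 ≤ m ∨ s.Nonempty)
    {x y : ℝ} (hx : c < x) (hxy : x < y) :
    x ^ m * ∏ i ∈ s, (1 - a i ^ 2 / x ^ 2) < y ^ m * ∏ i ∈ s, (1 - a i ^ 2 / y ^ 2) := by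
  have hx0 : 0 < x := hc.trans hx
  have hy0 : 0 < y := hx0.trans hxy
  have hfx : ∀ i, 0 < 1 - a i ^ 2 / x ^ 2 := by
    intro i
    have h1 : a i ^ 2 < x ^ 2 := by nlinarith [hapos i, hac i]
    have h2 : a i ^ 2 / x ^ 2 < 1 := (div_lt_one (by positivity)).2 h1
    linarith
  have hlt : ∀ i, 1 - a i ^ 2 / x ^ 2 < 1 - a i ^ 2 / y ^ 2 := by
    intro i
    have h1 : a i ^ 2 / y ^ 2 < a i ^ 2 / x ^ 2 :=
      div_lt_div_of_pos_left (pow_pos (hapos i) 2) (by positivity) (by nlinarith)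
    linarith
  have hple : ∏ i ∈ s, (1 - a i ^ 2 / x ^ 2) ≤ ∏ i ∈ s, (1 - a i ^ 2 / y ^ 2) :=
    Finset.prod_le_prod (fun i _ => (hfx i).le) (fun i _ => (hlt i).le)
  have hppos : 0 < ∏ i ∈ s, (1 - a i ^ 2 / x ^ 2) :=
    Finset.prod_pos fun i _ => hfx i
  rcases hm with hm | hs
  · have hxm : x ^ m < y ^ m := pow_lt_pow_left₀ hxy hx0.le (by omega)
    exact mul_lt_mul hxm hple hppos (by positivity)
  · have hxm : x ^ m ≤ y ^ m := pow_le_pow_left₀ hx0.le hxy.le m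
    have hplt : ∏ i ∈ s, (1 - a i ^ 2 / x ^ 2) < ∏ i ∈ s, (1 - a i ^ 2 / y ^ 2) :=
      Finset.prod_lt_prod_of_nonempty (fun i _ => hfx i) (fun i _ => hlt i) hs
    exact mul_lt_mul' hxm hplt hppos.le (by positivity)

/-- Rewriting `(∏ (x² - aᵢ²)) * x^e / x^j` into the canonical form. -/
theorem aux_eq {n : ℕ} (a : Fin n → ℝ) (s : Finset (Fin n)) (e j : ℕ) {x : ℝ}
    (hx : 0 < x) (hj : j ≤ 2 * s.card + e) :
    (∏ i ∈ s, (x ^ 2 - a i ^ 2)) * x ^ e / x ^ j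
      = x ^ (2 * s.card + e - j) * ∏ i ∈ s, (1 - a i ^ 2 / x ^ 2) := by
  have hx0 : x ≠ 0 := hx.ne'
  have h1 : ∏ i ∈ s, (x ^ 2 - a i ^ 2)
      = x ^ (2 * s.card) * ∏ i ∈ s, (1 - a i ^ 2 / x ^ 2) := by
    have : ∀ i ∈ s, x ^ 2 - a i ^ 2 = x ^ 2 * (1 - a i ^ 2 / x ^ 2) := by
      intro i _; field_simp
    rw [Finset.prod_congr rfl this, Finset.prod_mul_distrib, Finset.prod_const,
      ← pow_mul]
  rw [h1]
  rw [pow_sub₀ x hx0 hj]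
  field_simp
  ring

/-- Monotonicity of `P/x^j`, `P′/x^j`, `P″/x^j` on `(a_n, ∞)` for
`P(x) = a₀ ∏ᵢ (x² − aᵢ²)` with `0 < a₁ ≤ ⋯ ≤ a_n`: strictly increasing when `a₀ > 0`,
strictly decreasing when `a₀ < 0`. -/
theorem poly_div_pow_strictMonoOn (n : ℕ) (hn : 1 ≤ n) (a₀ : ℝ) (ha₀ : a₀ ≠ 0)
    (a : Fin n → ℝ) (hapos : ∀ i, 0 < a i) (hamono : Monotone a)
    (P : ℝ → ℝ) (hP : ∀ x, P x = a₀ * ∏ i, (x ^ 2 - a i ^ 2)) :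
    (0 < a₀ →
      (∀ j : ℕ, (j : ℤ) ≤ 2 * n →
        StrictMonoOn (fun x => P x / x ^ j) (Ioi (a ⟨n - 1, by omega⟩))) ∧
      (∀ j : ℕ, (j : ℤ) ≤ 2 * n - 2 →
        StrictMonoOn (fun x => deriv P x / x ^ j) (Ioi (a ⟨n - 1, by omega⟩))) ∧
      (∀ j : ℕ, (j : ℤ) ≤ 2 * n - 4 →
        StrictMonoOn (fun x => deriv (deriv P) x / x ^ j) (Ioi (a ⟨n - 1, by omega⟩)))) ∧
    (a₀ < 0 →
      (∀ j : ℕ, (j : ℤ) ≤ 2 * n →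
        StrictAntiOn (fun x => P x / x ^ j) (Ioi (a ⟨n - 1, by omega⟩))) ∧
      (∀ j : ℕ, (j : ℤ) ≤ 2 * n - 2 →
        StrictAntiOn (fun x => deriv P x / x ^ j) (Ioi (a ⟨n - 1, by omega⟩))) ∧
      (∀ j : ℕ, (j : ℤ) ≤ 2 * n - 4 →
        StrictAntiOn (fun x => deriv (deriv P) x / x ^ j) (Ioi (a ⟨n - 1, by omega⟩)))) := by
  have hPfun : P = fun x => a₀ * ∏ i, (x ^ 2 - a i ^ 2) := funext hP
  subst hPfun
  haveI : Nonempty (Fin n) := ⟨⟨0, by omega⟩⟩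
  set c : ℝ := a ⟨n - 1, by omega⟩ with hc_def
  have hc : 0 < c := hapos _
  have hac : ∀ i, a i ≤ c := by
    intro i
    exact hamono (by simp [Fin.le_def]; omega)
  -- derivative of each factor
  have hfac : ∀ (b x : ℝ), HasDerivAt (fun x => x ^ 2 - b) (2 * x) x := by
    intro b x
    simpa using (hasDerivAt_pow 2 x).sub_const b
  -- first derivative of the product
  have hQ : ∀ x : ℝ, HasDerivAt (fun x => ∏ i, (x ^ 2 - a i ^ 2))
      (∑ i, (∏ k ∈ univ.erase i, (x ^ 2 - a k ^ 2)) * (2 * x)) x := by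
    intro x
    simpa [smul_eq_mul] using
      HasDerivAt.fun_finsetProd (u := univ) (f := fun i x => x ^ 2 - a i ^ 2)
        (f' := fun _ => 2 * x) (fun i _ => hfac (a i ^ 2) x)
  set S : ℝ → ℝ := fun x => ∑ i, (∏ k ∈ univ.erase i, (x ^ 2 - a k ^ 2)) * (2 * x)
    with hS_def
  set T : ℝ → ℝ := fun x => ∑ i,
      ((∑ l ∈ univ.erase i, (∏ k ∈ (univ.erase i).erase l, (x ^ 2 - a k ^ 2)) * (2 * x))
          * (2 * x)
        + (∏ k ∈ univ.erase i, (x ^ 2 - a k ^ 2)) * 2) with hT_def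
  have hST : ∀ x : ℝ, HasDerivAt S (T x) x := by
    intro x
    apply HasDerivAt.fun_sum
    intro i _
    have hu : HasDerivAt (fun z => ∏ k ∈ univ.erase i, (z ^ 2 - a k ^ 2))
        (∑ l ∈ univ.erase i, (∏ k ∈ (univ.erase i).erase l, (x ^ 2 - a k ^ 2)) * (2 * x)) x := by
      simpa [smul_eq_mul] using
        HasDerivAt.fun_finsetProd (u := univ.erase i) (f := fun k x => x ^ 2 - a k ^ 2)
          (f' := fun _ => 2 * x) (fun k _ => hfac (a k ^ 2) x)
    have hv : HasDerivAt (fun z : ℝ => 2 * z) 2 x := by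
      simpa using (hasDerivAt_id x).const_mul 2
    exact hu.mul hv
  have hderivP : deriv (fun x => a₀ * ∏ i, (x ^ 2 - a i ^ 2)) = fun x => a₀ * S x :=
    funext fun x => ((hQ x).const_mul a₀).deriv
  have hderiv2P : deriv (fun x => a₀ * S x) = fun x => a₀ * T x :=
    funext fun x => ((hST x).const_mul a₀).deriv
  have hcard : (univ : Finset (Fin n)).card = n := by simp
  have hcard1 : ∀ i : Fin n, (univ.erase i).card = n - 1 := by
    intro i; simp [Finset.card_erase_of_mem]
  have hcard2 : ∀ (i l : Fin n), l ∈ univ.erase i → ((univ.erase i).erase l).card = n - 2 := by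
    intro i l hl
    rw [Finset.card_erase_of_mem hl, hcard1]
    omega
  -- base inequality for P
  have base1 : ∀ j : ℕ, j ≤ 2 * n → ∀ x y : ℝ, c < x → x < y →
      (∏ i, (x ^ 2 - a i ^ 2)) / x ^ j < (∏ i, (y ^ 2 - a i ^ 2)) / y ^ j := by
    intro j hj x y hx hxy
    have hx0 : 0 < x := hc.trans hx
    have hy0 : 0 < y := hx0.trans hxy
    have hrw : ∀ z : ℝ, 0 < z → (∏ i, (z ^ 2 - a i ^ 2)) / z ^ j
        = z ^ (2 * n - j) * ∏ i, (1 - a i ^ 2 / z ^ 2) := by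
      intro z hz
      have := aux_eq a univ 0 j hz (by rw [hcard]; omega)
      simpa [hcard] using this
    rw [hrw x hx0, hrw y hy0]
    apply aux_key a hapos c hc hac univ (2 * n - j) _ hx hxy
    rcases Nat.lt_or_ge j (2 * n) with h | h
    · left; omega
    · right
      exact Finset.univ_nonempty (α := Fin n)
  -- base inequality for P′
  have base2 : ∀ j : ℕ, j + 2 ≤ 2 * n → ∀ x y : ℝ, c < x → x < y →
      S x / x ^ j < S y / y ^ j := by
    intro j hj x y hx hxy
    have hx0 : 0 < x := hc.trans hx
    have hy0 : 0 < y := hx0.trans hxy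
    have hrw : ∀ z : ℝ, 0 < z → S z / z ^ j
        = ∑ i, 2 * (z ^ (2 * n - 1 - j) * ∏ k ∈ univ.erase i, (1 - a k ^ 2 / z ^ 2)) := by
      intro z hz
      rw [hS_def]
      rw [Finset.sum_div]
      apply Finset.sum_congr rfl
      intro i _
      have h1 : (∏ k ∈ univ.erase i, (z ^ 2 - a k ^ 2)) * (2 * z) / z ^ j
          = 2 * ((∏ k ∈ univ.erase i, (z ^ 2 - a k ^ 2)) * z ^ 1 / z ^ j) := by
        ring
      rw [h1, aux_eq a _ 1 j hz (by rw [hcard1 i]; omega), hcard1 i]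
      have : 2 * (n - 1) + 1 - j = 2 * n - 1 - j := by omega
      rw [this]
    rw [hrw x hx0, hrw y hy0]
    apply Finset.sum_lt_sum_of_nonempty (Finset.univ_nonempty (α := Fin n))
    intro i _
    have := aux_key a hapos c hc hac (univ.erase i) (2 * n - 1 - j) (Or.inl (by omega)) hx hxy
    linarith
  -- base inequality for P″
  have base3 : ∀ j : ℕ, j + 4 ≤ 2 * n → ∀ x y : ℝ, c < x → x < y →
      T x / x ^ j < T y / y ^ j := by
    intro j hj x y hx hxy
    have hx0 : 0 < x := hc.trans hx
    have hy0 : 0 < y := hx0.trans hxy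
    have hrw : ∀ z : ℝ, 0 < z → T z / z ^ j
        = ∑ i, ((∑ l ∈ univ.erase i,
            4 * (z ^ (2 * n - 2 - j) * ∏ k ∈ (univ.erase i).erase l, (1 - a k ^ 2 / z ^ 2)))
          + 2 * (z ^ (2 * n - 2 - j) * ∏ k ∈ univ.erase i, (1 - a k ^ 2 / z ^ 2))) := by
      intro z hz
      rw [hT_def]
      rw [Finset.sum_div]
      apply Finset.sum_congr rfl
      intro i _
      rw [add_div, Finset.sum_mul, Finset.sum_div]
      congr 1
      · apply Finset.sum_congr rfl
        intro l hl
        have h1 : (∏ k ∈ (univ.erase i).erase l, (z ^ 2 - a k ^ 2)) * (2 * z) * (2 * z) / z ^ j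
            = 4 * ((∏ k ∈ (univ.erase i).erase l, (z ^ 2 - a k ^ 2)) * z ^ 2 / z ^ j) := by
          ring
        rw [h1, aux_eq a _ 2 j hz (by rw [hcard2 i l hl]; omega), hcard2 i l hl]
        have : 2 * (n - 2) + 2 - j = 2 * n - 2 - j := by omega
        rw [this]
      · have h1 : (∏ k ∈ univ.erase i, (z ^ 2 - a k ^ 2)) * 2 / z ^ j
            = 2 * ((∏ k ∈ univ.erase i, (z ^ 2 - a k ^ 2)) * z ^ 0 / z ^ j) := by
          ring
        rw [h1, aux_eq a _ 0 j hz (by rw [hcard1 i]; omega), hcard1 i]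
        have : 2 * (n - 1) + 0 - j = 2 * n - 2 - j := by omega
        rw [this]
    rw [hrw x hx0, hrw y hy0]
    apply Finset.sum_lt_sum_of_nonempty (Finset.univ_nonempty (α := Fin n))
    intro i _
    have h2 : 2 * (x ^ (2 * n - 2 - j) * ∏ k ∈ univ.erase i, (1 - a k ^ 2 / x ^ 2))
        < 2 * (y ^ (2 * n - 2 - j) * ∏ k ∈ univ.erase i, (1 - a k ^ 2 / y ^ 2)) := by
      have := aux_key a hapos c hc hac (univ.erase i) (2 * n - 2 - j) (Or.inl (by omega)) hx hxy
      linarith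
    have h4 : ∀ l ∈ univ.erase i,
        4 * (x ^ (2 * n - 2 - j) * ∏ k ∈ (univ.erase i).erase l, (1 - a k ^ 2 / x ^ 2))
        ≤ 4 * (y ^ (2 * n - 2 - j) * ∏ k ∈ (univ.erase i).erase l, (1 - a k ^ 2 / y ^ 2)) := by
      intro l _
      have := aux_key a hapos c hc hac ((univ.erase i).erase l) (2 * n - 2 - j)
        (Or.inl (by omega)) hx hxy
      linarith
    exact add_lt_add_of_le_of_lt (Finset.sum_le_sum h4) h2
  simp only [hderivP, hderiv2P]
  constructor
  · intro hpos
    refine ⟨fun j hj => ?_, fun j hj => ?_, fun j hj => ?_⟩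
    · intro x hx y hy hxy
      simp only [mul_div_assoc]
      exact mul_lt_mul_of_pos_left (base1 j (by omega) x y hx hxy) hpos
    · intro x hx y hy hxy
      simp only [mul_div_assoc]
      exact mul_lt_mul_of_pos_left (base2 j (by omega) x y hx hxy) hpos
    · intro x hx y hy hxy
      simp only [mul_div_assoc]
      exact mul_lt_mul_of_pos_left (base3 j (by omega) x y hx hxy) hpos
  · intro hneg
    refine ⟨fun j hj => ?_, fun j hj => ?_, fun j hj => ?_⟩
    · intro x hx y hy hxy
      simp only [mul_div_assoc]
      exact mul_lt_mul_of_neg_left (base1 j (by omega) x y hx hxy) hneg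
    · intro x hx y hy hxy
      simp only [mul_div_assoc]
      exact mul_lt_mul_of_neg_left (base2 j (by omega) x y hx hxy) hneg
    · intro x hx y hy hxy
      simp only [mul_div_assoc]
      exact mul_lt_mul_of_neg_left (base3 j (by omega) x y hx hxy) hneg
end

section
/- Let d ≥ 1 be an integer and q ≥ 2 an even integer. Then the radial moments of the kernel G^B_{d,q} are: B_{d,0}(G^B_{d,q}) = Γ(d/2)/(2π^{d/2}) = 1/b_d; B_{d,i}(G^B_{d,q}) = 0 for every even i with 2 ≤ i ≤ q−2; and B_{d,q}(G^B_{d,q}) = (−1)^{q/2+1} · Γ((d+q)/2) · Γ((d+q+4)/2) / (2π^{d/2} · Γ((d+2q+4)/2)). In particular, G^B_{d,q} satisfies the q-th order radial moment condition. -/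
open MeasureTheory Set Filter Topology

/-- Radial moment `B_{d,i}(G) = ∫₀^∞ x^{d−1+i} G(x) dx`. -/
noncomputable def Bmom (d i : ℕ) (G : ℝ → ℝ) : ℝ :=
  ∫ x in Ioi (0 : ℝ), x ^ (d - 1 + i) * G x

/-- `V_{d,1}(G) = ∫₀^∞ x^{d−1} (G′(x))² dx`. -/
noncomputable def V1 (d : ℕ) (G : ℝ → ℝ) : ℝ :=
  ∫ x in Ioi (0 : ℝ), x ^ (d - 1) * (deriv G x) ^ 2

/-- `b_d = 2 π^{d/2} / Γ(d/2)`. -/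
noncomputable def bconst (d : ℕ) : ℝ :=
  2 * Real.pi ^ ((d : ℝ) / 2) / Real.Gamma ((d : ℝ) / 2)

/-- The `q`-th order radial moment condition, with all integrals converging absolutely:
`B_{d,0}(G) = 1/b_d`, `B_{d,i}(G) = 0` for even `2 ≤ i ≤ q−2`, and `B_{d,q}(G) ≠ 0`. -/
def MomentCond (d q : ℕ) (G : ℝ → ℝ) : Prop :=
  (∀ i, Even i → i ≤ q → IntegrableOn (fun x => x ^ (d - 1 + i) * G x) (Ioi 0)) ∧
  Bmom d 0 G = (bconst d)⁻¹ ∧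
  (∀ i, Even i → 2 ≤ i → i ≤ q - 2 → Bmom d i G = 0) ∧
  Bmom d q G ≠ 0

/-- `g` changes its sign (exactly) `k` times on `[0,∞)`: there are points
`0 = x₀ < x₁ < ⋯ < x_{k+1} = ∞` such that on each `[x_{j−1}, x_j]` the function has a
constant weak sign `s_j ∈ {±1}`, is not identically zero there, and consecutive signs
alternate. -/
def ChangesSign (g : ℝ → ℝ) (k : ℕ) : Prop :=
  ∃ (t : Fin (k + 2) → EReal) (s : Fin (k + 1) → ℝ),
    StrictMono t ∧ t 0 = 0 ∧ t (Fin.last (k + 1)) = ⊤ ∧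
    (∀ j, s j = 1 ∨ s j = -1) ∧
    (∀ j : Fin k, s j.succ = - s j.castSucc) ∧
    ∀ j : Fin (k + 1),
      (∀ x : ℝ, t j.castSucc ≤ (x : EReal) → (x : EReal) ≤ t j.succ → 0 ≤ s j * g x) ∧
      (∃ x : ℝ, t j.castSucc ≤ (x : EReal) ∧ (x : EReal) ≤ t j.succ ∧ 0 < s j * g x)

/-- Coefficients of the optimal kernel `G^B_{d,q}`. -/
noncomputable def cB (d q i : ℕ) : ℝ :=
  (-1 : ℝ) ^ (i / 2) * Real.Gamma (((d : ℝ) + q + 4) / 2) * Real.Gamma (((d : ℝ) + q + i) / 2) /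
    (Real.pi ^ ((d : ℝ) / 2) * Real.Gamma ((q : ℝ) / 2) * Real.Gamma ((2 + (i : ℝ)) / 2) *
      Real.Gamma (((d : ℝ) + 2 + i) / 2) * Real.Gamma (((q : ℝ) + 4 - i) / 2))

/-- The optimal radial kernel `G^B_{d,q}(x) = (∑_{i ∈ {0,2,…,q+2}} c_{d,q,i} x^i)·𝟙[x ≤ 1]`. -/
noncomputable def GB (d q : ℕ) : ℝ → ℝ := fun x =>
  if x ≤ 1 then ∑ i ∈ Finset.range (q / 2 + 2), cB d q (2 * i) * x ^ (2 * i) else 0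



section Aux
open Finset Polynomial


lemma alt_rec (n : ℕ) (f : ℕ → ℝ) :
    ∑ j ∈ range (n+2), (-1:ℝ)^j * ((n+1).choose j) * f j
    = ∑ j ∈ range (n+1), (-1:ℝ)^j * (n.choose j) * f j
      - ∑ j ∈ range (n+1), (-1:ℝ)^j * (n.choose j) * f (j+1) := by
  have hB : ∑ j ∈ range (n+1), (-1:ℝ)^j * (n.choose (j+1)) * f (j+1)
      = ∑ j ∈ range n, (-1:ℝ)^j * (n.choose (j+1)) * f (j+1) := by
    rw [Finset.sum_range_succ, Nat.choose_succ_self]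
    simp
  rw [Finset.sum_range_succ' (fun j => (-1:ℝ)^j * ((n+1).choose j) * f j) (n+1)]
  rw [Finset.sum_range_succ' (fun j => (-1:ℝ)^j * (n.choose j) * f j) n]
  have h1 : ∀ j ∈ range (n+1), (-1:ℝ)^(j+1) * ((n+1).choose (j+1)) * f (j+1)
      = -((-1:ℝ)^j * (n.choose j) * f (j+1)) - (-1:ℝ)^j * (n.choose (j+1)) * f (j+1) := by
    intro j _
    rw [Nat.choose_succ_succ]
    push_cast
    ring
  rw [Finset.sum_congr rfl h1, Finset.sum_sub_distrib]
  rw [Finset.sum_neg_distrib, hB]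
  have h2 : ∀ j ∈ range n, (-1:ℝ)^j * (n.choose (j+1)) * f (j+1)
      = -((-1:ℝ)^(j+1) * (n.choose (j+1)) * f (j+1)) := by
    intro j _; ring
  rw [Finset.sum_congr rfl h2, Finset.sum_neg_distrib]
  simp [Nat.choose_zero_right]
  ring

lemma alt_poly_zero : ∀ (n : ℕ) (P : ℝ[X]), P.degree < n →
    ∀ x : ℝ, ∑ j ∈ range (n+1), (-1:ℝ)^j * (n.choose j) * P.eval (x + j) = 0 := by
  intro n
  induction n with
  | zero =>
    intro P hP x
    have : P = 0 := Polynomial.degree_eq_bot.mp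
      (Nat.WithBot.lt_zero_iff.mp (by exact_mod_cast hP))
    simp [this]
  | succ n ih =>
    intro P hP x
    have hrec := alt_rec n (fun j => P.eval (x + j))
    rw [hrec]
    set Q := P - P.comp (X + C 1) with hQ
    have hQdeg : Q.degree < n := by
      by_cases hP0 : P = 0
      · simp only [hQ, hP0, Polynomial.zero_comp, sub_zero, Polynomial.degree_zero]
        exact bot_lt_iff_ne_bot.mpr (by simp)
      · have hlc : (P.comp (X + C 1)).leadingCoeff = P.leadingCoeff := by
          rw [Polynomial.leadingCoeff_comp (by
            rw [Polynomial.natDegree_X_add_C]; exact one_ne_zero)]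
          rw [Polynomial.leadingCoeff_X_add_C, one_pow, mul_one]
        have hc0 : P.comp (X + C 1) ≠ 0 := by
          intro h
          apply hP0
          rw [← Polynomial.leadingCoeff_eq_zero, ← hlc, h, Polynomial.leadingCoeff_zero]
        have hnd : (P.comp (X + C 1)).natDegree = P.natDegree := by
          rw [← Polynomial.taylor_apply, Polynomial.natDegree_taylor]
        have hdeg : (P.comp (X + C 1)).degree = P.degree := by
          rw [Polynomial.degree_eq_natDegree hc0, Polynomial.degree_eq_natDegree hP0, hnd]
        have h1 : Q.degree < P.degree :=
          Polynomial.degree_sub_lt hdeg.symm hP0 hlc.symm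
        have h2 : P.degree ≤ (n : WithBot ℕ) := by
          rw [Polynomial.degree_eq_natDegree hP0] at hP ⊢
          exact_mod_cast Nat.lt_succ_iff.mp (by exact_mod_cast hP)
        exact lt_of_lt_of_le h1 h2
    have hQev : ∀ j : ℕ, Q.eval (x + j) = P.eval (x + j) - P.eval (x + ((j+1:ℕ):ℝ)) := by
      intro j
      simp only [hQ, Polynomial.eval_sub, Polynomial.eval_comp, Polynomial.eval_add,
        Polynomial.eval_X, Polynomial.eval_C]
      congr 2
      push_cast; ring
    have := ih Q hQdeg x
    calc (∑ j ∈ range (n+1), (-1:ℝ)^j * (n.choose j) * P.eval (x + j))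
        - ∑ j ∈ range (n+1), (-1:ℝ)^j * (n.choose j) * P.eval (x + ((j+1:ℕ):ℝ))
        = ∑ j ∈ range (n+1), (-1:ℝ)^j * (n.choose j) * Q.eval (x + j) := by
          rw [← Finset.sum_sub_distrib]
          exact Finset.sum_congr rfl fun j _ => by rw [hQev]; ring
      _ = 0 := this

lemma prod_pos_ne (n : ℕ) {a : ℝ} (ha : 0 < a) : (0:ℝ) < ∏ t ∈ range n, (a + t) :=
  Finset.prod_pos fun t _ => by positivity

lemma alt_inv : ∀ (n : ℕ) (a : ℝ), 0 < a →
    ∑ j ∈ range (n+1), (-1:ℝ)^j * (n.choose j) * (a + j)⁻¹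
    = (n.factorial : ℝ) / ∏ t ∈ range (n+1), (a + t) := by
  intro n
  induction n with
  | zero => intro a ha; simp
  | succ n ih =>
    intro a ha
    rw [alt_rec n (fun j => (a + j)⁻¹)]
    have h1 : ∑ j ∈ range (n+1), (-1:ℝ)^j * (n.choose j) * (a + ((j+1:ℕ):ℝ))⁻¹
        = ∑ j ∈ range (n+1), (-1:ℝ)^j * (n.choose j) * ((a+1) + (j:ℝ))⁻¹ := by
      refine Finset.sum_congr rfl fun j _ => by push_cast; ring_nf
    rw [h1, ih a ha, ih (a+1) (by linarith)]
    have hP : (0:ℝ) < ∏ t ∈ range (n+1), (a + t) := prod_pos_ne _ ha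
    have hP2 : (0:ℝ) < ∏ t ∈ range (n+1), (a + 1 + t) := prod_pos_ne _ (by linarith)
    have e1 : ∏ t ∈ range (n+2), (a + t) = (∏ t ∈ range (n+1), (a + t)) * (a + (n+1)) := by
      rw [Finset.prod_range_succ]; push_cast; ring_nf
    have e2 : ∏ t ∈ range (n+2), (a + t) = a * ∏ t ∈ range (n+1), (a + 1 + t) := by
      rw [Finset.prod_range_succ']
      rw [show (∏ t ∈ range (n+1), (a + ((t+1:ℕ):ℝ))) = ∏ t ∈ range (n+1), (a + 1 + t) from
        Finset.prod_congr rfl fun t _ => by push_cast; ring]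
      ring
    have key : a * ∏ t ∈ range (n+1), (a + 1 + t) = (a + ((n:ℝ)+1)) * ∏ t ∈ range (n+1), (a + t) := by
      rw [← e2, e1]; ring
    rw [div_sub_div _ _ (ne_of_gt hP) (ne_of_gt hP2)]
    rw [div_eq_div_iff (by positivity) (by rw [e1]; positivity)]
    rw [e2, Nat.factorial_succ]
    push_cast
    linear_combination ((n.factorial:ℝ) * ∏ t ∈ range (n+1), (a + 1 + t)) * key

lemma Gamma_seq (x : ℝ) (hx : 0 < x) : ∀ n : ℕ,
    Real.Gamma (x + n) = (∏ t ∈ range n, (x + t)) * Real.Gamma x := by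
  intro n
  induction n with
  | zero => simp
  | succ n ih =>
    have h : x + ((n:ℝ)+1) = (x + n) + 1 := by ring
    push_cast
    rw [h, Real.Gamma_add_one (by positivity), ih, Finset.prod_range_succ]
    ring

lemma eval_prod_linear (S : Finset ℕ) (y : ℝ) :
    (∏ t ∈ S, (X + C ((t:ℝ)+1))).eval y = ∏ t ∈ S, (y + 1 + t) := by
  rw [Polynomial.eval_prod]
  exact Finset.prod_congr rfl fun t _ => by simp; ring

lemma prod_linear_ne_zero (S : Finset ℕ) :
    (∏ t ∈ S, (X + C ((t:ℝ)+1))) ≠ 0 :=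
  Finset.prod_ne_zero_iff.mpr fun t _ => Polynomial.X_add_C_ne_zero _

lemma natDegree_prod_linear_le (S : Finset ℕ) :
    (∏ t ∈ S, (X + C ((t:ℝ)+1))).natDegree ≤ S.card := by
  refine le_trans (Polynomial.natDegree_prod_le _ _) ?_
  refine le_trans (Finset.sum_le_card_nsmul _ _ 1 fun t _ => ?_) (by simp)
  exact le_of_eq (Polynomial.natDegree_X_add_C _)

lemma key_mid (n k : ℕ) (hk1 : 1 ≤ k) (hk2 : k ≤ n) (a : ℝ) (ha : 0 < a) :
    ∑ j ∈ range (n+3), (-1:ℝ)^j * ((n+2).choose j) *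
      ((∏ t ∈ range n, (a + j + 1 + t)) / (a + k + j)) = 0 := by
  set P : ℝ[X] := ∏ t ∈ (range n).erase (k-1), (X + C ((t:ℝ)+1)) with hPdef
  have hmem : k - 1 ∈ range n := mem_range.mpr (by omega)
  have hterm : ∀ j : ℕ, (∏ t ∈ range n, (a + j + 1 + (t:ℝ))) / (a + k + j) = P.eval (a + j) := by
    intro j
    have hsplit := Finset.mul_prod_erase (range n) (fun t => a + j + 1 + (t:ℝ)) hmem
    have hfac : a + (j:ℝ) + 1 + ((k-1:ℕ):ℝ) = a + k + j := by
      have h1 : ((k-1:ℕ):ℝ) = (k:ℝ) - 1 := by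
        rw [Nat.cast_sub hk1]; norm_num
      rw [h1]; ring
    rw [← hsplit]
    simp only [hfac]
    rw [mul_div_cancel_left₀ _ (by positivity : a + (k:ℝ) + j ≠ 0)]
    rw [hPdef, eval_prod_linear]
  have hdeg : P.degree < ((n+2 : ℕ) : WithBot ℕ) := by
    rw [← Polynomial.natDegree_lt_iff_degree_lt (prod_linear_ne_zero _)]
    have := natDegree_prod_linear_le ((range n).erase (k-1))
    have hc : ((range n).erase (k-1)).card ≤ n := le_trans (Finset.card_erase_le) (by simp)
    omega
  have h0 := alt_poly_zero (n+2) P hdeg a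
  rw [show n+3 = n+2+1 from rfl]
  rw [← h0]
  exact Finset.sum_congr rfl fun j _ => by rw [hterm]

lemma prod_add_one_fact (n : ℕ) : ∏ t ∈ range n, ((t:ℝ)+1) = (n.factorial : ℝ) := by
  induction n with
  | zero => simp
  | succ n ih => rw [Finset.prod_range_succ, ih, Nat.factorial_succ]; push_cast; ring

lemma prod_desc (n : ℕ) : ∏ t ∈ range n, ((n:ℝ) - t) = (n.factorial : ℝ) := by
  rw [← prod_add_one_fact n, ← Finset.prod_range_reflect (fun j => (j:ℝ)+1) n]
  refine Finset.prod_congr rfl fun j hj => ?_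
  have hj' := mem_range.mp hj
  have h : ((n - 1 - j:ℕ):ℝ) = (n:ℝ) - 1 - j := by
    rw [Nat.cast_sub (by omega), Nat.cast_sub (by omega)]
    norm_num
  simp only [h]
  ring

lemma prod_root_neg (n : ℕ) :
    ∏ t ∈ range n, (-((n:ℝ)+1) + 1 + t) = (-1:ℝ)^n * (n.factorial : ℝ) := by
  have h : ∀ t ∈ range n, -((n:ℝ)+1) + 1 + t = -1 * ((n:ℝ) - t) := fun t _ => by ring
  rw [Finset.prod_congr rfl h, Finset.prod_mul_distrib, Finset.prod_const, card_range, prod_desc]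

lemma degQ_lt {P Q R : ℝ[X]} (n : ℕ) (hR1 : R.natDegree = 1) (hR0 : R ≠ 0) (c : ℝ)
    (hQ : P - C c = R * Q) (hPd : P.natDegree ≤ n) : Q.degree < ((n+2 : ℕ) : WithBot ℕ) := by
  by_cases hQ0 : Q = 0
  · rw [hQ0, Polynomial.degree_zero]
    exact bot_lt_iff_ne_bot.mpr (by simp)
  · rw [← Polynomial.natDegree_lt_iff_degree_lt hQ0]
    have h1 : (R * Q).natDegree = 1 + Q.natDegree := by
      rw [Polynomial.natDegree_mul hR0 hQ0, hR1]
    have h2 : (P - C c).natDegree ≤ n := by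
      refine le_trans (Polynomial.natDegree_sub_le _ _) ?_
      simp [Polynomial.natDegree_C, hPd]
    rw [hQ, h1] at h2
    omega

lemma key_zero (n : ℕ) (a : ℝ) (ha : 0 < a) :
    ∑ j ∈ range (n+3), (-1:ℝ)^j * ((n+2).choose j) *
      ((∏ t ∈ range n, (a + j + 1 + t)) / (a + j))
    = (n.factorial : ℝ) * ((n+2).factorial : ℝ) / ∏ t ∈ range (n+3), (a + t) := by
  set P : ℝ[X] := ∏ t ∈ range n, (X + C ((t:ℝ)+1)) with hPdef
  have hc : P.eval 0 = (n.factorial : ℝ) := by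
    rw [hPdef, eval_prod_linear, ← prod_add_one_fact n]
    exact Finset.prod_congr rfl fun t _ => by ring
  obtain ⟨Q, hQ⟩ : (X : ℝ[X]) ∣ (P - C (P.eval 0)) :=
    Polynomial.X_dvd_iff.mpr (by simp [Polynomial.coeff_zero_eq_eval_zero])
  have heval : ∀ j : ℕ, P.eval (a+j) = (a+j) * Q.eval (a+j) + (n.factorial : ℝ) := by
    intro j
    have h := congrArg (Polynomial.eval (a+(j:ℝ))) hQ
    simp only [Polynomial.eval_sub, Polynomial.eval_C, Polynomial.eval_mul,
      Polynomial.eval_X, hc] at h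
    linarith
  have hterm : ∀ j : ℕ, (∏ t ∈ range n, (a + (j:ℝ) + 1 + t)) / (a + j)
      = Q.eval (a+j) + (n.factorial : ℝ) * (a+j)⁻¹ := by
    intro j
    have haj : a + (j:ℝ) ≠ 0 := by positivity
    rw [show (∏ t ∈ range n, (a + (j:ℝ) + 1 + t)) = P.eval (a+j) from
      (eval_prod_linear _ _).symm, heval j]
    field_simp
  have hsum : ∑ j ∈ range (n+3), (-1:ℝ)^j * ((n+2).choose j) *
      ((∏ t ∈ range n, (a + j + 1 + t)) / (a + j))
      = (∑ j ∈ range (n+3), (-1:ℝ)^j * ((n+2).choose j) * Q.eval (a+j))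
        + (n.factorial : ℝ) * ∑ j ∈ range (n+3), (-1:ℝ)^j * ((n+2).choose j) * (a+j)⁻¹ := by
    rw [Finset.mul_sum, ← Finset.sum_add_distrib]
    exact Finset.sum_congr rfl fun j _ => by rw [hterm j]; ring
  rw [hsum]
  have hQdeg : Q.degree < ((n+2 : ℕ) : WithBot ℕ) := by
    refine degQ_lt n Polynomial.natDegree_X Polynomial.X_ne_zero _ hQ ?_
    rw [hPdef]; exact le_trans (natDegree_prod_linear_le (range n)) (by simp)
  rw [show n+3 = n+2+1 from rfl, alt_poly_zero (n+2) Q hQdeg a, alt_inv (n+2) a ha]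
  rw [zero_add, mul_div_assoc]

lemma key_top (n : ℕ) (a : ℝ) (ha : 0 < a) :
    ∑ j ∈ range (n+3), (-1:ℝ)^j * ((n+2).choose j) *
      ((∏ t ∈ range n, (a + j + 1 + t)) / (a + (n+1) + j))
    = (-1:ℝ)^n * (n.factorial : ℝ) * ((n+2).factorial : ℝ) / ∏ t ∈ range (n+3), (a + (n+1) + t) := by
  set P : ℝ[X] := ∏ t ∈ range n, (X + C ((t:ℝ)+1)) with hPdef
  have hc : P.eval (-((n:ℝ)+1)) = (-1:ℝ)^n * (n.factorial : ℝ) := by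
    rw [hPdef, eval_prod_linear, prod_root_neg]
  obtain ⟨Q, hQ⟩ : (X - C (-((n:ℝ)+1))) ∣ (P - C (P.eval (-((n:ℝ)+1)))) := by
    refine Polynomial.dvd_iff_isRoot.mpr ?_
    simp [Polynomial.IsRoot]
  have heval : ∀ j : ℕ, P.eval (a+j) = (a+(n+1)+j) * Q.eval (a+j) + (-1:ℝ)^n * (n.factorial : ℝ) := by
    intro j
    have h := congrArg (Polynomial.eval (a+(j:ℝ))) hQ
    simp only [Polynomial.eval_sub, Polynomial.eval_C, Polynomial.eval_mul,
      Polynomial.eval_X, hc] at h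
    nlinarith [h]
  have hterm : ∀ j : ℕ, (∏ t ∈ range n, (a + (j:ℝ) + 1 + t)) / (a + (n+1) + j)
      = Q.eval (a+j) + ((-1:ℝ)^n * (n.factorial : ℝ)) * (a+(n+1)+j)⁻¹ := by
    intro j
    have haj : a + ((n:ℝ)+1) + j ≠ 0 := by positivity
    rw [show (∏ t ∈ range n, (a + (j:ℝ) + 1 + t)) = P.eval (a+j) from
      (eval_prod_linear _ _).symm, heval j]
    field_simp
  have hsum : ∑ j ∈ range (n+3), (-1:ℝ)^j * ((n+2).choose j) *
      ((∏ t ∈ range n, (a + j + 1 + t)) / (a + (n+1) + j))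
      = (∑ j ∈ range (n+3), (-1:ℝ)^j * ((n+2).choose j) * Q.eval (a+j))
        + ((-1:ℝ)^n * (n.factorial : ℝ)) *
          ∑ j ∈ range (n+3), (-1:ℝ)^j * ((n+2).choose j) * ((a+(n+1))+j)⁻¹ := by
    rw [Finset.mul_sum, ← Finset.sum_add_distrib]
    refine Finset.sum_congr rfl fun j _ => ?_
    rw [hterm j]
    ring_nf
  rw [hsum]
  have hQdeg : Q.degree < ((n+2 : ℕ) : WithBot ℕ) := by
    refine degQ_lt n (Polynomial.natDegree_X_sub_C _) (Polynomial.X_sub_C_ne_zero _) _ hQ ?_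
    rw [hPdef]; exact le_trans (natDegree_prod_linear_le (range n)) (by simp)
  rw [show n+3 = n+2+1 from rfl, alt_poly_zero (n+2) Q hQdeg a,
    alt_inv (n+2) (a+((n:ℝ)+1)) (by positivity)]
  rw [zero_add, mul_div_assoc]

end Aux

section Integral
open Finset

lemma GB_eq_indicator (d q i : ℕ) : ∀ x ∈ Ioi (0:ℝ),
    x ^ (d - 1 + i) * GB d q x
    = (Ioc (0:ℝ) 1).indicator
        (fun x => x ^ (d-1+i) * ∑ j ∈ range (q/2+2), cB d q (2*j) * x ^ (2*j)) x := by
  intro x hx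
  by_cases hx1 : x ≤ 1
  · have hmem : x ∈ Ioc (0:ℝ) 1 := ⟨hx, hx1⟩
    rw [Set.indicator_of_mem hmem]
    simp [GB, hx1]
  · rw [Set.indicator_of_notMem (fun h => hx1 h.2), GB]
    simp [hx1]

lemma GB_cont (d q i : ℕ) :
    Continuous (fun x : ℝ => x ^ (d-1+i) * ∑ j ∈ range (q/2+2), cB d q (2*j) * x ^ (2*j)) := by
  continuity

lemma GB_integrable (d q i : ℕ) :
    IntegrableOn (fun x => x ^ (d - 1 + i) * GB d q x) (Ioi (0:ℝ)) := by
  have h1 : IntegrableOn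
      (fun x : ℝ => x ^ (d-1+i) * ∑ j ∈ range (q/2+2), cB d q (2*j) * x ^ (2*j))
      (Ioc (0:ℝ) 1) := (GB_cont d q i).integrableOn_Ioc
  have h2 := (h1.integrable_indicator measurableSet_Ioc).integrableOn (s := Ioi (0:ℝ))
  exact h2.congr_fun (fun x hx => (GB_eq_indicator d q i x hx).symm) measurableSet_Ioi

lemma Bmom_GB (d q i : ℕ) (hd : 1 ≤ d) :
    Bmom d i (GB d q) = ∑ j ∈ range (q/2+2), cB d q (2*j) * ((d+i+2*j : ℕ) : ℝ)⁻¹ := by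
  rw [Bmom, setIntegral_congr_fun measurableSet_Ioi (GB_eq_indicator d q i)]
  rw [setIntegral_indicator measurableSet_Ioc,
    Set.inter_eq_self_of_subset_right Set.Ioc_subset_Ioi_self]
  rw [← intervalIntegral.integral_of_le zero_le_one]
  have hfe : ∀ x : ℝ, x ^ (d-1+i) * ∑ j ∈ range (q/2+2), cB d q (2*j) * x ^ (2*j)
      = ∑ j ∈ range (q/2+2), cB d q (2*j) * x ^ (d-1+i+2*j) := by
    intro x
    rw [Finset.mul_sum]
    exact Finset.sum_congr rfl fun j _ => by rw [pow_add]; ring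
  simp only [hfe]
  rw [intervalIntegral.integral_finset_sum (fun j _ => (by fun_prop :
    Continuous (fun x : ℝ => cB d q (2*j) * x ^ (d-1+i+2*j))).intervalIntegrable _ _)]
  refine Finset.sum_congr rfl fun j _ => ?_
  rw [intervalIntegral.integral_const_mul, integral_pow]
  have h1 : ((d-1+i+2*j:ℕ):ℝ) + 1 = ((d+i+2*j:ℕ):ℝ) := by
    have h : (d-1+i+2*j+1 : ℕ) = d+i+2*j := by omega
    exact_mod_cast congrArg (Nat.cast : ℕ → ℝ) h
  rw [one_pow, zero_pow (by omega : d-1+i+2*j+1 ≠ 0), sub_zero, h1, one_div]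

end Integral

section Assembly
open Finset

lemma Gamma_pos' {x : ℝ} (hx : 0 < x) : 0 < Real.Gamma x := Real.Gamma_pos_of_pos hx

lemma bridge (d n k j : ℕ) (hd : 1 ≤ d) (hj : j ≤ n+2) :
    cB d (2*(n+1)) (2*j) * ((d + 2*k + 2*j : ℕ) : ℝ)⁻¹
    = (Real.Gamma ((d:ℝ)/2 + ((n:ℝ)+1) + 2) /
        (2 * Real.pi ^ ((d:ℝ)/2) * (n.factorial:ℝ) * ((n+2).factorial:ℝ)))
      * ((-1:ℝ)^j * (((n+2).choose j : ℕ):ℝ) *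
         ((∏ t ∈ range n, ((d:ℝ)/2 + j + 1 + t)) / ((d:ℝ)/2 + k + j))) := by
  have ha : (0:ℝ) < (d:ℝ)/2 := by
    have : (1:ℝ) ≤ (d:ℝ) := by exact_mod_cast hd
    linarith
  set a : ℝ := (d:ℝ)/2 with hadef
  simp only [cB]
  rw [show 2*j/2 = j from by omega]
  rw [show ((d:ℝ) + (2*(n+1):ℕ) + 4)/2 = a + ((n:ℝ)+1) + 2 from by push_cast; ring]
  rw [show ((d:ℝ) + (2*(n+1):ℕ) + (2*j:ℕ))/2 = (a+1+j) + n from by push_cast; ring]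
  rw [Gamma_seq (a+1+(j:ℝ)) (by positivity) n]
  rw [show ((2*(n+1):ℕ):ℝ)/2 = (n:ℝ) + 1 from by push_cast; ring]
  rw [Real.Gamma_nat_eq_factorial n]
  rw [show ((2:ℝ) + ((2*j:ℕ):ℝ))/2 = (j:ℝ) + 1 from by push_cast; ring]
  rw [Real.Gamma_nat_eq_factorial j]
  rw [show ((d:ℝ) + 2 + ((2*j:ℕ):ℝ))/2 = a + 1 + j from by push_cast; ring]
  rw [show (((2*(n+1):ℕ):ℝ) + 4 - ((2*j:ℕ):ℝ))/2 = ((n+2-j:ℕ):ℝ) + 1 from by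
    rw [Nat.cast_sub hj]; push_cast; ring]
  rw [Real.Gamma_nat_eq_factorial (n+2-j)]
  rw [show ((d + 2*k + 2*j : ℕ):ℝ) = 2*(a + k + j) from by push_cast; ring]
  have hchoose : (((n+2).factorial : ℕ):ℝ)
      = (((n+2).choose j : ℕ):ℝ) * (j.factorial : ℝ) * ((n+2-j).factorial : ℝ) := by
    exact_mod_cast (Nat.choose_mul_factorial_mul_factorial hj).symm
  have hG : 0 < Real.Gamma (a+1+j) := Gamma_pos' (by positivity)
  have hprod : ∀ x ∈ range n, (0:ℝ) < a + 1 + j + x := fun x _ => by positivity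
  have hpi : (0:ℝ) < Real.pi ^ a := Real.rpow_pos_of_pos Real.pi_pos a
  have hmatch : ∏ t ∈ range n, (a + 1 + (j:ℝ) + t) = ∏ t ∈ range n, (a + (j:ℝ) + 1 + t) :=
    Finset.prod_congr rfl fun t _ => by ring
  rw [hmatch, hchoose]
  have h1 : (j.factorial:ℝ) ≠ 0 := by exact_mod_cast j.factorial_ne_zero
  have h2 : ((n+2-j).factorial:ℝ) ≠ 0 := by exact_mod_cast (n+2-j).factorial_ne_zero
  have h3 : (n.factorial:ℝ) ≠ 0 := by exact_mod_cast n.factorial_ne_zero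
  have h4 : (((n+2).choose j : ℕ):ℝ) ≠ 0 := by exact_mod_cast (Nat.choose_pos hj).ne'
  have h5 : a + (k:ℝ) + j ≠ 0 := by positivity
  field_simp
  ring

lemma Bmom_sum (d n k : ℕ) (hd : 1 ≤ d) :
    Bmom d (2*k) (GB d (2*(n+1)))
    = (Real.Gamma ((d:ℝ)/2 + ((n:ℝ)+1) + 2) /
        (2 * Real.pi ^ ((d:ℝ)/2) * (n.factorial:ℝ) * ((n+2).factorial:ℝ)))
      * ∑ j ∈ range (n+3), (-1:ℝ)^j * (((n+2).choose j : ℕ):ℝ) *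
         ((∏ t ∈ range n, ((d:ℝ)/2 + j + 1 + t)) / ((d:ℝ)/2 + k + j)) := by
  rw [Bmom_GB d (2*(n+1)) (2*k) hd]
  rw [show 2*(n+1)/2 + 2 = n+3 from by omega]
  rw [Finset.mul_sum]
  refine Finset.sum_congr rfl fun j hj => ?_
  exact bridge d n k j hd (by have := Finset.mem_range.mp hj; omega) |>.trans (by ring)

lemma Bmom_GB_zero (d n : ℕ) (hd : 1 ≤ d) :
    Bmom d 0 (GB d (2*(n+1)))
    = Real.Gamma ((d:ℝ)/2) / (2 * Real.pi ^ ((d:ℝ)/2)) := by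
  have ha : (0:ℝ) < (d:ℝ)/2 := by
    have : (1:ℝ) ≤ (d:ℝ) := by exact_mod_cast hd
    linarith
  have h0 := Bmom_sum d n 0 hd
  rw [show 2*0 = 0 from rfl] at h0
  rw [h0]
  have hz := key_zero n ((d:ℝ)/2) ha
  have hcast : ∑ j ∈ range (n+3), (-1:ℝ)^j * (((n+2).choose j : ℕ):ℝ) *
      ((∏ t ∈ range n, ((d:ℝ)/2 + j + 1 + t)) / ((d:ℝ)/2 + ((0:ℕ):ℝ) + j))
      = ∑ j ∈ range (n+3), (-1:ℝ)^j * (((n+2).choose j : ℕ):ℝ) *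
      ((∏ t ∈ range n, ((d:ℝ)/2 + j + 1 + t)) / ((d:ℝ)/2 + j)) := by
    refine Finset.sum_congr rfl fun j _ => ?_
    norm_num
  rw [hcast, hz]
  have hG0 : 0 < Real.Gamma ((d:ℝ)/2) := Gamma_pos' ha
  have hG2 : 0 < Real.Gamma ((d:ℝ)/2 + ((n:ℝ)+1) + 2) := Gamma_pos' (by positivity)
  have hpi : (0:ℝ) < Real.pi ^ ((d:ℝ)/2) := Real.rpow_pos_of_pos Real.pi_pos _
  have hProd : ∏ t ∈ range (n+3), ((d:ℝ)/2 + t)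
      = Real.Gamma ((d:ℝ)/2 + ((n:ℝ)+1) + 2) / Real.Gamma ((d:ℝ)/2) := by
    have hgs := Gamma_seq ((d:ℝ)/2) ha (n+3)
    rw [show (d:ℝ)/2 + ((n+3:ℕ):ℝ) = (d:ℝ)/2 + ((n:ℝ)+1) + 2 from by push_cast; ring] at hgs
    rw [eq_div_iff (ne_of_gt hG0)]
    linarith [hgs]
  rw [hProd]
  have h3 : (n.factorial:ℝ) ≠ 0 := by exact_mod_cast n.factorial_ne_zero
  have h4 : ((n+2).factorial:ℝ) ≠ 0 := by exact_mod_cast (n+2).factorial_ne_zero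
  field_simp

lemma Bmom_GB_mid (d n k : ℕ) (hd : 1 ≤ d) (hk1 : 1 ≤ k) (hk2 : k ≤ n) :
    Bmom d (2*k) (GB d (2*(n+1))) = 0 := by
  have ha : (0:ℝ) < (d:ℝ)/2 := by
    have : (1:ℝ) ≤ (d:ℝ) := by exact_mod_cast hd
    linarith
  rw [Bmom_sum d n k hd, key_mid n k hk1 hk2 ((d:ℝ)/2) ha, mul_zero]

lemma Bmom_GB_top (d n : ℕ) (hd : 1 ≤ d) :
    Bmom d (2*(n+1)) (GB d (2*(n+1)))
    = (-1 : ℝ) ^ (n+2) * Real.Gamma ((d:ℝ)/2 + ((n:ℝ)+1)) *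
        Real.Gamma ((d:ℝ)/2 + ((n:ℝ)+1) + 2) /
        (2 * Real.pi ^ ((d:ℝ)/2) * Real.Gamma ((d:ℝ)/2 + 2*((n:ℝ)+1) + 2)) := by
  have ha : (0:ℝ) < (d:ℝ)/2 := by
    have : (1:ℝ) ≤ (d:ℝ) := by exact_mod_cast hd
    linarith
  rw [Bmom_sum d n (n+1) hd]
  have hcast : ∑ j ∈ range (n+3), (-1:ℝ)^j * (((n+2).choose j : ℕ):ℝ) *
      ((∏ t ∈ range n, ((d:ℝ)/2 + j + 1 + t)) / ((d:ℝ)/2 + ((n+1:ℕ):ℝ) + j))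
      = ∑ j ∈ range (n+3), (-1:ℝ)^j * (((n+2).choose j : ℕ):ℝ) *
      ((∏ t ∈ range n, ((d:ℝ)/2 + j + 1 + t)) / ((d:ℝ)/2 + ((n:ℝ)+1) + j)) := by
    refine Finset.sum_congr rfl fun j _ => ?_
    norm_num
  rw [hcast, key_top n ((d:ℝ)/2) ha]
  have hGm : 0 < Real.Gamma ((d:ℝ)/2 + ((n:ℝ)+1)) := Gamma_pos' (by positivity)
  have hG2 : 0 < Real.Gamma ((d:ℝ)/2 + ((n:ℝ)+1) + 2) := Gamma_pos' (by positivity)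
  have hGt : 0 < Real.Gamma ((d:ℝ)/2 + 2*((n:ℝ)+1) + 2) := Gamma_pos' (by positivity)
  have hpi : (0:ℝ) < Real.pi ^ ((d:ℝ)/2) := Real.rpow_pos_of_pos Real.pi_pos _
  have hProd : ∏ t ∈ range (n+3), ((d:ℝ)/2 + ((n:ℝ)+1) + t)
      = Real.Gamma ((d:ℝ)/2 + 2*((n:ℝ)+1) + 2) / Real.Gamma ((d:ℝ)/2 + ((n:ℝ)+1)) := by
    have hgs := Gamma_seq ((d:ℝ)/2 + ((n:ℝ)+1)) (by positivity) (n+3)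
    rw [show (d:ℝ)/2 + ((n:ℝ)+1) + ((n+3:ℕ):ℝ) = (d:ℝ)/2 + 2*((n:ℝ)+1) + 2 from by
      push_cast; ring] at hgs
    rw [eq_div_iff (ne_of_gt hGm)]
    linarith [hgs]
  rw [hProd]
  have h3 : (n.factorial:ℝ) ≠ 0 := by exact_mod_cast n.factorial_ne_zero
  have h4 : ((n+2).factorial:ℝ) ≠ 0 := by exact_mod_cast (n+2).factorial_ne_zero
  have hm1 : ((-1:ℝ))^n = (-1:ℝ)^(n+2) := by
    rw [pow_add]
    norm_num
  rw [hm1]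
  field_simp

end Assembly

/-- Radial moments of the optimal kernel `G^B_{d,q}`:
`B_{d,0} = Γ(d/2)/(2π^{d/2}) = 1/b_d`, the intermediate even moments vanish, and
`B_{d,q} = (−1)^{q/2+1} Γ((d+q)/2) Γ((d+q+4)/2) / (2π^{d/2} Γ((d+2q+4)/2))`; in particular
`G^B_{d,q}` satisfies the `q`-th order radial moment condition. -/
theorem GB_moments (d q : ℕ) (hd : 1 ≤ d) (hq : 2 ≤ q) (hqe : Even q) :
    Bmom d 0 (GB d q) = Real.Gamma ((d : ℝ) / 2) / (2 * Real.pi ^ ((d : ℝ) / 2)) ∧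
    Bmom d 0 (GB d q) = (bconst d)⁻¹ ∧
    (∀ i, Even i → 2 ≤ i → i ≤ q - 2 → Bmom d i (GB d q) = 0) ∧
    Bmom d q (GB d q) =
      (-1 : ℝ) ^ (q / 2 + 1) * Real.Gamma (((d : ℝ) + q) / 2) *
        Real.Gamma (((d : ℝ) + q + 4) / 2) /
        (2 * Real.pi ^ ((d : ℝ) / 2) * Real.Gamma (((d : ℝ) + 2 * q + 4) / 2)) ∧
    MomentCond d q (GB d q) := by
  obtain ⟨n, hn⟩ : ∃ n, q = 2*(n+1) := by
    obtain ⟨r, hr⟩ := hqe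
    exact ⟨r - 1, by omega⟩
  subst hn
  have ha : (0:ℝ) < (d:ℝ)/2 := by
    have : (1:ℝ) ≤ (d:ℝ) := by exact_mod_cast hd
    linarith
  have h0 := Bmom_GB_zero d n hd
  have hbc : (bconst d)⁻¹ = Real.Gamma ((d:ℝ)/2) / (2*Real.pi^((d:ℝ)/2)) := by
    rw [bconst, inv_div]
  have hmid : ∀ i, Even i → 2 ≤ i → i ≤ 2*(n+1) - 2 → Bmom d i (GB d (2*(n+1))) = 0 := by
    intro i hie h2 hle
    obtain ⟨r, hr⟩ := hie
    have hi : i = 2*r := by omega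
    rw [hi]
    exact Bmom_GB_mid d n r hd (by omega) (by omega)
  have htop : Bmom d (2*(n+1)) (GB d (2*(n+1)))
      = (-1 : ℝ) ^ (2*(n+1) / 2 + 1) * Real.Gamma (((d : ℝ) + (2*(n+1):ℕ)) / 2) *
        Real.Gamma (((d : ℝ) + (2*(n+1):ℕ) + 4) / 2) /
        (2 * Real.pi ^ ((d : ℝ) / 2) *
          Real.Gamma (((d : ℝ) + 2 * (2*(n+1):ℕ) + 4) / 2)) := by
    rw [Bmom_GB_top d n hd]
    rw [show 2*(n+1)/2 + 1 = n+2 from by omega]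
    rw [show ((d:ℝ) + (2*(n+1):ℕ))/2 = (d:ℝ)/2 + ((n:ℝ)+1) from by push_cast; ring]
    rw [show ((d:ℝ) + (2*(n+1):ℕ) + 4)/2 = (d:ℝ)/2 + ((n:ℝ)+1) + 2 from by push_cast; ring]
    rw [show ((d:ℝ) + 2*((2*(n+1):ℕ):ℝ) + 4)/2 = (d:ℝ)/2 + 2*((n:ℝ)+1) + 2 from by
      push_cast; ring]
  have hGm : 0 < Real.Gamma ((d:ℝ)/2 + ((n:ℝ)+1)) := Real.Gamma_pos_of_pos (by positivity)
  have hG2 : 0 < Real.Gamma ((d:ℝ)/2 + ((n:ℝ)+1) + 2) := Real.Gamma_pos_of_pos (by positivity)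
  have hGt : 0 < Real.Gamma ((d:ℝ)/2 + 2*((n:ℝ)+1) + 2) := Real.Gamma_pos_of_pos (by positivity)
  have hpi : (0:ℝ) < Real.pi ^ ((d:ℝ)/2) := Real.rpow_pos_of_pos Real.pi_pos _
  refine ⟨h0, h0.trans hbc.symm, hmid, htop, ?_, h0.trans hbc.symm, hmid, ?_⟩
  · intro i _ _
    exact GB_integrable d (2*(n+1)) i
  · rw [Bmom_GB_top d n hd]
    apply div_ne_zero
    · apply mul_ne_zero (mul_ne_zero (pow_ne_zero _ (by norm_num)) (ne_of_gt hGm)) (ne_of_gt hG2)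
    · positivity
end

section
/- Let d ≥ 1 be an integer and q ≥ 2 an even integer, and let G : [0,∞) → ℝ be differentiable with G′ continuous almost everywhere, such that ∫₀^∞ x^{d−1+i}|G(x)| dx < ∞ and ∫₀^∞ x^{d+i}|G′(x)| dx < ∞ for all 0 ≤ i ≤ q+1, and x^{d+q}·G(x) → 0 as x → ∞. Then the integration-by-parts identity B_{d,i}(G) = −(d+i)^{−1}·B_{d,i+1}(G′) holds for every i ∈ {0, 1, …, q}, and consequently the following are equivalent: (i) G satisfies the q-th order radial moment condition; (ii) G′ satisfies B_{d,1}(G′) = −d/b_d, B_{d,i}(G′) = 0 for every odd i with 3 ≤ i ≤ q−1, and B_{d,q+1}(G′) ≠ 0. -/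
open MeasureTheory Set Filter Topology

/-- Integration by parts for radial moments: under integrability and tail conditions,
`B_{d,i}(G) = −(d+i)⁻¹ B_{d,i+1}(G′)` for `0 ≤ i ≤ q`, and consequently `G` satisfies the
`q`-th order radial moment condition iff `G′` satisfies the corresponding odd-moment
conditions. -/
theorem radial_moment_integration_by_parts (d q : ℕ) (hd : 1 ≤ d) (hq : 2 ≤ q)
    (hqe : Even q) (G : ℝ → ℝ)
    (hdiff : ∀ x ∈ Ici (0 : ℝ), DifferentiableAt ℝ G x)
    (hcont : ∀ᵐ x ∂(volume.restrict (Ioi (0 : ℝ))), ContinuousAt (deriv G) x)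
    (hintG : ∀ i ≤ q + 1, IntegrableOn (fun x => x ^ (d - 1 + i) * |G x|) (Ioi 0))
    (hintG' : ∀ i ≤ q + 1, IntegrableOn (fun x => x ^ (d + i) * |deriv G x|) (Ioi 0))
    (htail : Filter.Tendsto (fun x => x ^ (d + q) * G x) Filter.atTop (nhds 0)) :
    (∀ i ≤ q, Bmom d i G = -(((d : ℝ) + i)⁻¹) * Bmom d (i + 1) (deriv G)) ∧
    ((Bmom d 0 G = (bconst d)⁻¹ ∧
        (∀ i, Even i → 2 ≤ i → i ≤ q - 2 → Bmom d i G = 0) ∧ Bmom d q G ≠ 0) ↔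
      (Bmom d 1 (deriv G) = -(d : ℝ) / bconst d ∧
        (∀ i, Odd i → 3 ≤ i → i ≤ q - 1 → Bmom d i (deriv G) = 0) ∧
        Bmom d (q + 1) (deriv G) ≠ 0)) := by
  have hGcont : ContinuousOn G (Ioi 0) := fun x hx =>
    ((hdiff x (mem_Ici.mpr (le_of_lt hx))).continuousAt).continuousWithinAt
  have hGm : AEStronglyMeasurable G (volume.restrict (Ioi (0:ℝ))) :=
    hGcont.aestronglyMeasurable measurableSet_Ioi
  have hG'm : AEStronglyMeasurable (deriv G) (volume.restrict (Ioi (0:ℝ))) :=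
    (measurable_deriv G).aestronglyMeasurable.restrict
  have hposae : ∀ᵐ x ∂(volume.restrict (Ioi (0:ℝ))), x ∈ Ioi (0:ℝ) :=
    ae_restrict_mem measurableSet_Ioi
  have habsG : ∀ i ≤ q + 1, IntegrableOn (fun x => x ^ (d - 1 + i) * G x) (Ioi 0) := by
    intro i hi
    refine (hintG i hi).mono'
      (((continuous_pow (d-1+i)).aestronglyMeasurable.restrict).mul hGm) ?_
    filter_upwards [hposae] with x hx
    simp [Real.norm_eq_abs, abs_mul, abs_pow, abs_of_pos (mem_Ioi.mp hx), le_refl]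
  have habsG' : ∀ i ≤ q + 1, IntegrableOn (fun x => x ^ (d + i) * deriv G x) (Ioi 0) := by
    intro i hi
    refine (hintG' i hi).mono'
      (((continuous_pow (d+i)).aestronglyMeasurable.restrict).mul hG'm) ?_
    filter_upwards [hposae] with x hx
    simp [Real.norm_eq_abs, abs_mul, abs_pow, abs_of_pos (mem_Ioi.mp hx), le_refl]
  -- tail for each i ≤ q
  have htail' : ∀ i ≤ q, Tendsto (fun x => x ^ (d + i) * G x) atTop (𝓝 0) := by
    intro i hi
    have habs : Tendsto (fun x => |x ^ (d + q) * G x|) atTop (𝓝 0) := by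
      simpa using htail.abs
    have hneg : Tendsto (fun x => -|x ^ (d + q) * G x|) atTop (𝓝 0) := by
      simpa using habs.neg
    have hb : ∀ x : ℝ, 1 ≤ x → |x ^ (d + i) * G x| ≤ |x ^ (d + q) * G x| := by
      intro x hx
      rw [abs_mul, abs_mul, abs_pow, abs_pow]
      exact mul_le_mul_of_nonneg_right
        (pow_le_pow_right₀ (le_trans hx (le_abs_self x)) (by omega)) (abs_nonneg _)
    refine tendsto_of_tendsto_of_tendsto_of_le_of_le' hneg habs ?_ ?_
    · filter_upwards [eventually_ge_atTop (1:ℝ)] with x hx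
      linarith [neg_abs_le (x ^ (d + i) * G x), hb x hx]
    · filter_upwards [eventually_ge_atTop (1:ℝ)] with x hx
      exact (le_abs_self _).trans (hb x hx)
  -- the IBP identity
  have hIBP : ∀ i ≤ q, Bmom d i G = -(((d : ℝ) + i)⁻¹) * Bmom d (i + 1) (deriv G) := by
    intro i hi
    set n := d + i with hn
    have hn1 : n - 1 = d - 1 + i := by omega
    have hderiv : ∀ x ∈ Ici (0:ℝ), HasDerivAt (fun x => x ^ n * G x)
        ((n : ℝ) * x ^ (d - 1 + i) * G x + x ^ n * deriv G x) x := by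
      intro x hx
      have h1 : HasDerivAt (fun x : ℝ => x ^ n) ((n:ℝ) * x ^ (n - 1)) x := hasDerivAt_pow n x
      have h2 : HasDerivAt G (deriv G x) x := (hdiff x hx).hasDerivAt
      have := h1.mul h2
      rw [hn1] at this
      exact this
    have hint : IntegrableOn (fun x => (n : ℝ) * x ^ (d - 1 + i) * G x + x ^ n * deriv G x)
        (Ioi 0) := by
      have h1 : IntegrableOn (fun x => (n : ℝ) * (x ^ (d - 1 + i) * G x)) (Ioi 0) :=
        (habsG i (by omega)).const_mul _
      have h2 := habsG' i (by omega)
      refine (h1.add h2).congr ?_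
      filter_upwards with x
      simp only [Pi.add_apply]; ring
    have key : ∫ x in Ioi (0:ℝ), ((n : ℝ) * x ^ (d - 1 + i) * G x + x ^ n * deriv G x)
        = 0 - ((0:ℝ) ^ n * G 0) := by
      refine integral_Ioi_of_hasDerivAt_of_tendsto' hderiv hint ?_
      simpa [hn] using htail' i hi
    have hzero : (0:ℝ) ^ n * G 0 = 0 := by
      rw [zero_pow (by omega)]; ring
    rw [hzero, sub_zero] at key
    have hsplit : ∫ x in Ioi (0:ℝ), ((n : ℝ) * x ^ (d - 1 + i) * G x + x ^ n * deriv G x)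
        = (n : ℝ) * (∫ x in Ioi (0:ℝ), x ^ (d - 1 + i) * G x)
          + ∫ x in Ioi (0:ℝ), x ^ n * deriv G x := by
      rw [← integral_const_mul, ← integral_add ((habsG i (by omega)).const_mul _)
        (habsG' i (by omega))]
      congr 1; funext x; ring
    rw [hsplit] at key
    have hnne : ((d : ℝ) + i) ≠ 0 := by positivity
    have hcast : ((n : ℕ) : ℝ) = (d : ℝ) + i := by push_cast [hn]; ring
    rw [hcast] at key
    have hexp : d - 1 + (i + 1) = n := by omega
    unfold Bmom
    rw [hexp]
    field_simp
    linarith [key]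
  constructor
  · exact hIBP
  · -- derived: B_{i+1}(G') = -(d+i) * B_i(G)
    have hrev : ∀ i ≤ q, Bmom d (i + 1) (deriv G) = -((d : ℝ) + i) * Bmom d i G := by
      intro i hi
      have h := hIBP i hi
      have hnne : ((d : ℝ) + i) ≠ 0 := by positivity
      field_simp at h ⊢
      linarith [h]
    have hd0 : ((d : ℝ)) ≠ 0 := by positivity
    constructor
    · rintro ⟨h0, h2, hqne⟩
      refine ⟨?_, ?_, ?_⟩
      · have := hrev 0 (by omega)
        simp only [Nat.cast_zero, add_zero] at this
        rw [this, h0]; field_simp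
      · intro j hjodd hj3 hjq
        obtain ⟨i, rfl⟩ : ∃ i, j = i + 1 := ⟨j - 1, by omega⟩
        have hie : Even i := by
          rcases hjodd with ⟨k, hk⟩; exact ⟨k, by omega⟩
        rw [hrev i (by omega), h2 i hie (by omega) (by omega)]; ring
      · rw [hrev q le_rfl]
        intro h
        rcases mul_eq_zero.mp h with h | h
        · have : ((d : ℝ) + q) ≠ 0 := by positivity
          simp [neg_eq_zero] at h; exact this (by linarith [h])
        · exact hqne h
    · rintro ⟨h1, h3, hqne⟩
      refine ⟨?_, ?_, ?_⟩
      · have h := hIBP 0 (by omega)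
        simp only [Nat.cast_zero, add_zero] at h
        rw [h, h1]; field_simp
      · intro i hie hi2 hiq
        rw [hIBP i (by omega), h3 (i+1) (by rcases hie with ⟨k, hk⟩; exact ⟨k, by omega⟩)
          (by omega) (by omega)]; ring
      · rw [hIBP q le_rfl]
        intro h
        rcases mul_eq_zero.mp h with h | h
        · have hnne : ((d : ℝ) + q) ≠ 0 := by positivity
          simp [neg_eq_zero, inv_eq_zero] at h; exact hnne h
        · exact hqne h
end
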